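/- Let K be an imaginary quadratic field with ring of integers Z_K. The set of homothety classes of lattices Λ ⊂ C with {λ ∈ C : λΛ ⊆ Λ} = Z_K is in bijection with the ideal class group Cl_K of K; in particular, there are exactly h_K = #Cl_K isomorphism classes of complex elliptic curves with CM by Z_K. -/

import Mathlib

open NumberField Submodule
open scoped nonZeroDivisors


/-- A lattice in `ℂ`: a discrete additive subgroup spanning `ℂ` over `ℝ`. -/
def IsComplexLattice (Λ : AddSubgroup ℂ) : Prop :=
  DiscreteTopology Λ ∧ Submodule.span ℝ (Λ : Set ℂ) = ⊤

/-- The multiplier ring `{λ ∈ ℂ : λΛ ⊆ Λ}` of a lattice. -/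
def multiplierRing (Λ : AddSubgroup ℂ) : Set ℂ :=
  {lam : ℂ | ∀ w ∈ Λ, lam * w ∈ Λ}

/-- Two subgroups of `ℂ` are homothetic if one is a nonzero scalar multiple of the other. -/
def Homothetic (Λ Λ' : AddSubgroup ℂ) : Prop :=
  ∃ lam : ℂ, lam ≠ 0 ∧ AddSubgroup.map (AddMonoidHom.mulLeft lam) Λ = Λ'

lemma map_mulLeft_map_mulLeft (μ lam : ℂ) (Λ : AddSubgroup ℂ) :
    AddSubgroup.map (AddMonoidHom.mulLeft μ) (AddSubgroup.map (AddMonoidHom.mulLeft lam) Λ)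
      = AddSubgroup.map (AddMonoidHom.mulLeft (μ * lam)) Λ := by
  rw [AddSubgroup.map_map]
  congr 1
  ext z
  simp [mul_assoc]

lemma map_mulLeft_one (Λ : AddSubgroup ℂ) :
    AddSubgroup.map (AddMonoidHom.mulLeft (1 : ℂ)) Λ = Λ := by
  ext z
  simp [AddSubgroup.mem_map]

/-- Homothety, as a setoid on the lattices with a given multiplier ring `R ⊆ ℂ`. -/
def CMLatticeSetoid (R : Set ℂ) :
    Setoid {Λ : AddSubgroup ℂ // IsComplexLattice Λ ∧ multiplierRing Λ = R} where
  r Λ Λ' := Homothetic Λ.1 Λ'.1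
  iseqv := by
    constructor
    · exact fun Λ => ⟨1, one_ne_zero, map_mulLeft_one Λ.1⟩
    · rintro Λ Λ' ⟨lam, hlam, h⟩
      exact ⟨lam⁻¹, inv_ne_zero hlam, by
        rw [← h, map_mulLeft_map_mulLeft, inv_mul_cancel₀ hlam, map_mulLeft_one]⟩
    · rintro Λ Λ' Λ'' ⟨lam, hlam, h⟩ ⟨μ, hμ, h'⟩
      exact ⟨μ * lam, mul_ne_zero hμ hlam, by rw [← map_mulLeft_map_mulLeft, h, h']⟩



section aux
variable {K : Type*} [Field K] [NumberField K] (ι : K →+* ℂ)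

lemma exists_den (x : K) : ∃ (n : ℤ) (y : 𝓞 K), n ≠ 0 ∧ (n : K) * x = algebraMap (𝓞 K) K y := by
  have halg : IsAlgebraic ℤ x :=
    (IsFractionRing.isAlgebraic_iff ℤ ℚ K).mpr (Algebra.IsAlgebraic.isAlgebraic x)
  obtain ⟨n, hn, hint⟩ := halg.exists_integral_multiple
  refine ⟨n, ⟨n • x, hint⟩, hn, ?_⟩
  show (n : K) * x = n • x
  rw [zsmul_eq_mul]

lemma span_top_of_im {z : ℂ} (hz : z.im ≠ 0) (M : Submodule ℝ ℂ) (h1 : (1:ℂ) ∈ M)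
    (h2 : z ∈ M) : M = ⊤ := by
  rw [eq_top_iff]
  rintro u -
  have : u = (u.re - u.im * z.re / z.im) • (1:ℂ) + (u.im / z.im) • z := by
    apply Complex.ext <;> simp <;> field_simp <;> ring
  rw [this]
  exact M.add_mem (M.smul_mem _ h1) (M.smul_mem _ h2)

end aux
section aux2
variable {K : Type*} [Field K] [NumberField K] (ι : K →+* ℂ)

lemma lattice_gen (Λ : AddSubgroup ℂ) (hΛd : DiscreteTopology Λ)
    (hΛs : Submodule.span ℝ (Λ : Set ℂ) = ⊤) :
    ∃ v : Fin 2 → ℂ, (∀ i, v i ∈ Λ) ∧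
      Submodule.span ℤ (Set.range v) = AddSubgroup.toIntSubmodule Λ := by
  set L := AddSubgroup.toIntSubmodule Λ with hL
  haveI : DiscreteTopology L := hΛd
  haveI : IsZLattice ℝ L := ⟨hΛs⟩
  haveI := ZLattice.module_free ℝ L
  haveI := ZLattice.module_finite ℝ L
  have hrk : Module.finrank ℤ L = 2 := by
    rw [ZLattice.rank ℝ L, Complex.finrank_real_complex]
  have hcard : Fintype.card (Module.Free.ChooseBasisIndex ℤ L) = 2 := by
    rw [← Module.finrank_eq_card_chooseBasisIndex, hrk]
  let b := (Module.Free.chooseBasis ℤ L).reindex (Fintype.equivFinOfCardEq hcard)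
  refine ⟨fun i => (b i : ℂ), fun i => (b i).2, ?_⟩
  have : Set.range (fun i => (b i : ℂ)) = L.subtype '' Set.range b := by
    rw [← Set.range_comp]; rfl
  rw [this, ← Submodule.map_span, b.span_eq, Submodule.map_top, Submodule.range_subtype]

lemma lattice_elem_div (hdeg : Module.finrank ℚ K = 2) (Λ : AddSubgroup ℂ)
    (hΛd : DiscreteTopology Λ) (hΛs : Submodule.span ℝ (Λ : Set ℂ) = ⊤)
    (hm : ∀ (x : 𝓞 K), ∀ z ∈ Λ, ι (algebraMap (𝓞 K) K x) * z ∈ Λ)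
    {w : ℂ} (hw : w ∈ Λ) (hw0 : w ≠ 0) {g : ℂ} (hg : g ∈ Λ) :
    ∃ x : K, ι x * w = g := by
  classical
  obtain ⟨v, hv, hvspan⟩ := lattice_gen Λ hΛd hΛs
  let f : K →ₗ[ℚ] ℂ :=
    { toFun := fun x => ι x * w
      map_add' := fun x y => by show ι (x+y) * w = ι x * w + ι y * w; rw [_root_.map_add]; ring
      map_smul' := fun q x => by
        show ι (q • x) * w = q • (ι x * w)
        rw [Rat.smul_def q x, _root_.map_mul, map_ratCast, Rat.smul_def]
        ring }
  have hfinj : Function.Injective f := by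
    intro a b hab
    have : ι a * w = ι b * w := hab
    exact ι.injective (mul_right_cancel₀ hw0 this)
  have hWrank : Module.finrank ℚ (LinearMap.range f) = 2 := by
    rw [LinearMap.finrank_range_of_inj hfinj, hdeg]
  set V := Submodule.span ℚ ((Λ : Set ℂ)) with hV
  have hVle : V ≤ Submodule.span ℚ (Set.range v) := by
    rw [hV, Submodule.span_le]
    intro z hz
    have hz' : z ∈ Submodule.span ℤ (Set.range v) := by rw [hvspan]; exact hz
    exact Submodule.span_le_restrictScalars ℤ ℚ (Set.range v) hz'
  haveI hVfin' : FiniteDimensional ℚ (Submodule.span ℚ (Set.range v)) :=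
    FiniteDimensional.span_of_finite ℚ (Set.finite_range v)
  haveI hVfin : FiniteDimensional ℚ V := Submodule.finiteDimensional_of_le hVle
  have hVrank : Module.finrank ℚ V ≤ 2 := by
    refine le_trans (Submodule.finrank_mono hVle) (le_trans (finrank_span_le_card _) ?_)
    rw [Set.toFinset_card]
    exact le_trans (Fintype.card_range_le v) (by simp)
  have hWle : LinearMap.range f ≤ V := by
    rintro _ ⟨x, rfl⟩
    obtain ⟨n, y, hn, hxy⟩ := exists_den x
    have h1 : f (algebraMap (𝓞 K) K y) ∈ V := Submodule.subset_span (hm y w hw)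
    have h2 : f (algebraMap (𝓞 K) K y) = (n : ℚ) • f x := by
      rw [← map_smul]
      congr 1
      rw [Rat.smul_def, ← hxy]
      norm_num
    have hn' : (n : ℚ) ≠ 0 := Int.cast_ne_zero.mpr hn
    have : f x = (n : ℚ)⁻¹ • f (algebraMap (𝓞 K) K y) := by
      rw [h2, smul_smul, inv_mul_cancel₀ hn', one_smul]
    rw [this]
    exact V.smul_mem _ h1
  have hWV : LinearMap.range f = V :=
    Submodule.eq_of_le_of_finrank_le hWle (by rw [hWrank]; exact hVrank)
  have : g ∈ LinearMap.range f := by rw [hWV]; exact Submodule.subset_span hg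
  obtain ⟨x, hx⟩ := this
  exact ⟨x, hx⟩

end aux2
section aux3
variable {K : Type*} [Field K] [NumberField K] (ι : K →+* ℂ)

/-- The fractional-ideal-to-be attached to a lattice `Λ` and a base point `w`. -/
def latSub (Λ : AddSubgroup ℂ)
    (hm : ∀ (x : 𝓞 K), ∀ z ∈ Λ, ι (algebraMap (𝓞 K) K x) * z ∈ Λ) (w : ℂ) :
    Submodule (𝓞 K) K where
  carrier := {x : K | ι x * w ∈ Λ}
  add_mem' := fun {x y} hx hy => by
    simp only [Set.mem_setOf_eq, _root_.map_add, add_mul] at *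
    exact Λ.add_mem hx hy
  zero_mem' := by simp only [Set.mem_setOf_eq, _root_.map_zero, zero_mul]; exact Λ.zero_mem
  smul_mem' := fun c x hx => by
    simp only [Set.mem_setOf_eq] at *
    have : (c • x) = algebraMap (𝓞 K) K c * x := Algebra.smul_def c x
    rw [this, _root_.map_mul, mul_assoc]
    exact hm c _ hx

lemma mem_latSub {Λ : AddSubgroup ℂ} {hm} {w : ℂ} {x : K} :
    x ∈ latSub ι Λ hm w ↔ ι x * w ∈ Λ := Iff.rfl

lemma latSub_fg (hdeg : Module.finrank ℚ K = 2) (Λ : AddSubgroup ℂ)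
    (hΛd : DiscreteTopology Λ) (hΛs : Submodule.span ℝ (Λ : Set ℂ) = ⊤)
    (hm : ∀ (x : 𝓞 K), ∀ z ∈ Λ, ι (algebraMap (𝓞 K) K x) * z ∈ Λ)
    {w : ℂ} (hw : w ∈ Λ) (hw0 : w ≠ 0) : (latSub ι Λ hm w).FG := by
  classical
  obtain ⟨v, hv, hvspan⟩ := lattice_gen Λ hΛd hΛs
  choose xf hxf using fun i => lattice_elem_div ι hdeg Λ hΛd hΛs hm hw hw0 (hv i)
  refine ⟨(Finset.univ : Finset (Fin 2)).image xf, ?_⟩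
  apply le_antisymm
  · rw [Submodule.span_le]
    intro x hx
    simp only [Finset.coe_image, Finset.coe_univ, Set.image_univ, Set.mem_range] at hx
    obtain ⟨i, rfl⟩ := hx
    rw [SetLike.mem_coe, mem_latSub, hxf i]
    exact hv i
  · intro x hx
    rw [mem_latSub] at hx
    have hx' : ι x * w ∈ Submodule.span ℤ (Set.range v) := by rw [hvspan]; exact hx
    rw [mem_span_range_iff_exists_fun] at hx'
    obtain ⟨c, hc⟩ := hx'
    have : ι (∑ i, (c i : K) * xf i) * w = ι x * w := by
      rw [map_sum, Finset.sum_mul, ← hc]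
      congr 1
      ext i
      rw [_root_.map_mul, map_intCast, mul_assoc, hxf i, zsmul_eq_mul]
    have hxe : x = ∑ i, (c i : K) * xf i :=
      (ι.injective (mul_right_cancel₀ hw0 this)).symm
    rw [hxe]
    apply Submodule.sum_mem
    intro i _
    have hxi : xf i ∈ Submodule.span (𝓞 K) ((Finset.univ.image xf : Finset K) : Set K) :=
      Submodule.subset_span (by simp)
    have : (c i : K) * xf i = (algebraMap ℤ (𝓞 K) (c i)) • xf i := by
      rw [Algebra.smul_def, ← IsScalarTower.algebraMap_apply ℤ (𝓞 K) K]
      norm_num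
    rw [this]
    exact Submodule.smul_mem _ _ hxi

lemma latSub_one_mem {Λ : AddSubgroup ℂ} {hm} {w : ℂ} (hw : w ∈ Λ) :
    (1 : K) ∈ latSub ι Λ hm w := by rw [mem_latSub, _root_.map_one, one_mul]; exact hw

lemma latSub_surj (hdeg : Module.finrank ℚ K = 2) (Λ : AddSubgroup ℂ)
    (hΛd : DiscreteTopology Λ) (hΛs : Submodule.span ℝ (Λ : Set ℂ) = ⊤)
    (hm : ∀ (x : 𝓞 K), ∀ z ∈ Λ, ι (algebraMap (𝓞 K) K x) * z ∈ Λ)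
    {w : ℂ} (hw : w ∈ Λ) (hw0 : w ≠ 0) {g : ℂ} (hg : g ∈ Λ) :
    ∃ x ∈ latSub ι Λ hm w, ι x * w = g := by
  obtain ⟨x, hx⟩ := lattice_elem_div ι hdeg Λ hΛd hΛs hm hw hw0 hg
  exact ⟨x, by rw [mem_latSub, hx]; exact hg, hx⟩

end aux3
section aux4
variable {K : Type*} [Field K] [NumberField K]

lemma classgroup_mk_eq_iff {I J : (FractionalIdeal (𝓞 K)⁰ K)ˣ} :
    ClassGroup.mk K I = ClassGroup.mk K J ↔
      ∃ u : K, u ≠ 0 ∧ (I : FractionalIdeal (𝓞 K)⁰ K)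
        = FractionalIdeal.spanSingleton (𝓞 K)⁰ u * (J : FractionalIdeal (𝓞 K)⁰ K) := by
  have h1 : (ClassGroup.mk K I = ClassGroup.mk K J) ↔ ClassGroup.mk K (I * J⁻¹) = 1 := by
    rw [_root_.map_mul, _root_.map_inv, mul_inv_eq_one]
  rw [h1, ClassGroup.mk_eq_one_iff]
  have hval : ((I * J⁻¹ : (FractionalIdeal (𝓞 K)⁰ K)ˣ) : FractionalIdeal (𝓞 K)⁰ K)
      = (I : FractionalIdeal (𝓞 K)⁰ K) * (J : FractionalIdeal (𝓞 K)⁰ K)⁻¹ := by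
    rw [Units.val_mul, Units.val_inv_eq_inv_val]
  constructor
  · rintro ⟨⟨u, hu⟩⟩
    have hspan : ((I * J⁻¹ : (FractionalIdeal (𝓞 K)⁰ K)ˣ) : FractionalIdeal (𝓞 K)⁰ K)
        = FractionalIdeal.spanSingleton (𝓞 K)⁰ u := by
      have h2 := hu
      rw [← FractionalIdeal.coe_spanSingleton (𝓞 K)⁰ u] at h2
      exact FractionalIdeal.coeToSubmodule_injective h2
    have hu0 : u ≠ 0 := by
      rintro rfl
      apply Units.ne_zero (I * J⁻¹)
      rw [hspan, FractionalIdeal.spanSingleton_zero]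
    refine ⟨u, hu0, ?_⟩
    rw [hval] at hspan
    exact (mul_inv_eq_iff_eq_mul₀ (Units.ne_zero J)).mp hspan
  · rintro ⟨u, hu0, hu⟩
    refine ⟨⟨u, ?_⟩⟩
    rw [hval, ← FractionalIdeal.coe_spanSingleton (𝓞 K)⁰ u]
    congr 1
    rw [mul_inv_eq_iff_eq_mul₀ (Units.ne_zero J)]
    exact hu

end aux4
section aux5
variable {K : Type*} [Field K] [NumberField K] (ι : K →+* ℂ)

/-- The lattice attached to an integral ideal. -/
noncomputable def idealLattice (I : Ideal (𝓞 K)) : AddSubgroup ℂ :=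
  AddSubgroup.map (ι.comp (algebraMap (𝓞 K) K)).toAddMonoidHom I.toAddSubgroup

lemma mem_idealLattice {I : Ideal (𝓞 K)} {z : ℂ} :
    z ∈ idealLattice ι I ↔ ∃ a ∈ I, ι (algebraMap (𝓞 K) K a) = z := by
  simp only [idealLattice, AddSubgroup.mem_map, Submodule.mem_toAddSubgroup,
    RingHom.toAddMonoidHom_eq_coe, AddMonoidHom.coe_coe, RingHom.coe_comp, Function.comp_apply]

noncomputable def intBasisC : (Module.Free.ChooseBasisIndex ℤ (𝓞 K)) → ℂ :=
  fun i => ι (algebraMap (𝓞 K) K (RingOfIntegers.basis K i))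

lemma theta_mem_span (x : 𝓞 K) :
    ι (algebraMap (𝓞 K) K x) ∈ Submodule.span ℤ (Set.range (intBasisC ι)) := by
  let f : (𝓞 K) →ₗ[ℤ] ℂ := (ι.comp (algebraMap (𝓞 K) K)).toAddMonoidHom.toIntLinearMap
  have hx : x ∈ (⊤ : Submodule ℤ (𝓞 K)) := trivial
  rw [← (RingOfIntegers.basis K).span_eq] at hx
  have : f x ∈ Submodule.map f (Submodule.span ℤ (Set.range (RingOfIntegers.basis K))) :=
    Submodule.mem_map_of_mem hx
  rw [Submodule.map_span, ← Set.range_comp] at this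
  exact this

lemma intBasisC_spans (him : ∃ x : K, (ι x).im ≠ 0) :
    Submodule.span ℝ (Set.range (intBasisC ι)) = ⊤ := by
  obtain ⟨x, hx⟩ := him
  obtain ⟨n, y, hn, hxy⟩ := exists_den x
  have hincl : ∀ w : 𝓞 K, ι (algebraMap (𝓞 K) K w) ∈ Submodule.span ℝ (Set.range (intBasisC ι)) :=
    fun w => Submodule.span_le_restrictScalars ℤ ℝ _ (theta_mem_span ι w)
  have him' : (ι (algebraMap (𝓞 K) K y)).im ≠ 0 := by
    rw [← hxy, _root_.map_mul]
    have : ι ((n : ℤ) : K) = ((n : ℤ) : ℂ) := by push_cast; exact map_intCast ι n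
    rw [this]
    simp only [Complex.mul_im, Complex.intCast_re, Complex.intCast_im, zero_mul, add_zero]
    exact mul_ne_zero (by exact_mod_cast hn) hx
  refine span_top_of_im him' _ ?_ (hincl y)
  have := hincl 1
  rwa [_root_.map_one, _root_.map_one] at this

noncomputable def intBasisR (him : ∃ x : K, (ι x).im ≠ 0)
    (hdeg : Module.finrank ℚ K = 2) : Module.Basis (Module.Free.ChooseBasisIndex ℤ (𝓞 K)) ℝ ℂ :=
  basisOfTopLeSpanOfCardEqFinrank (intBasisC ι) (le_of_eq (intBasisC_spans ι him).symm)
    (by rw [← Module.finrank_eq_card_chooseBasisIndex, RingOfIntegers.rank, hdeg,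
          Complex.finrank_real_complex])

lemma coe_intBasisR (him) (hdeg) : ⇑(intBasisR ι him hdeg) = intBasisC ι :=
  coe_basisOfTopLeSpanOfCardEqFinrank _ _ _

lemma idealLattice_discrete (him : ∃ x : K, (ι x).im ≠ 0)
    (hdeg : Module.finrank ℚ K = 2) (I : Ideal (𝓞 K)) :
    DiscreteTopology (idealLattice ι I) := by
  have hd : DiscreteTopology (Submodule.span ℤ (Set.range (intBasisC ι))) := by
    rw [← coe_intBasisR ι him hdeg]
    infer_instance
  have hsub : (idealLattice ι I : Set ℂ) ⊆
      ((Submodule.span ℤ (Set.range (intBasisC ι)) : Submodule ℤ ℂ) : Set ℂ) := by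
    intro z hz
    obtain ⟨a, _, rfl⟩ := (mem_idealLattice ι).mp hz
    exact theta_mem_span ι a
  exact DiscreteTopology.of_subset hd hsub

lemma idealLattice_span (him : ∃ x : K, (ι x).im ≠ 0)
    (I : Ideal (𝓞 K)) (hI : I ≠ ⊥) :
    Submodule.span ℝ ((idealLattice ι I : Set ℂ)) = ⊤ := by
  obtain ⟨a, haI, ha0⟩ := Submodule.exists_mem_ne_zero_of_ne_bot hI
  have hθa : ι (algebraMap (𝓞 K) K a) ≠ 0 := by
    simp only [ne_eq, map_eq_zero]
    intro h
    exact ha0 ((map_eq_zero_iff _ (IsFractionRing.injective (𝓞 K) K)).mp h)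
  rw [eq_top_iff]
  intro u _
  let m : ℂ →ₗ[ℝ] ℂ := LinearMap.mulLeft ℝ (ι (algebraMap (𝓞 K) K a))
  have hu : u = m (u / ι (algebraMap (𝓞 K) K a)) := by
    simp only [m, LinearMap.mulLeft_apply]
    field_simp
  have hmem : u / ι (algebraMap (𝓞 K) K a) ∈ Submodule.span ℝ (Set.range (intBasisC ι)) := by
    rw [intBasisC_spans ι him]; trivial
  rw [hu]
  have : m (u / ι (algebraMap (𝓞 K) K a)) ∈
      Submodule.map m (Submodule.span ℝ (Set.range (intBasisC ι))) :=
    Submodule.mem_map_of_mem hmem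
  rw [Submodule.map_span] at this
  refine Submodule.span_mono ?_ this
  rintro _ ⟨_, ⟨i, rfl⟩, rfl⟩
  simp only [m, LinearMap.mulLeft_apply, intBasisC]
  rw [← _root_.map_mul, ← _root_.map_mul]
  exact (mem_idealLattice ι).mpr ⟨a * RingOfIntegers.basis K i, I.mul_mem_right _ haI, rfl⟩

end aux5
section aux6
variable {K : Type*} [Field K] [NumberField K] (ι : K →+* ℂ)

lemma idealLattice_mult (I : Ideal (𝓞 K)) (hI : I ≠ ⊥) :
    multiplierRing (idealLattice ι I) = Set.range ⇑(ι.comp (algebraMap (𝓞 K) K)) := by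
  obtain ⟨a, haI, ha0⟩ := Submodule.exists_mem_ne_zero_of_ne_bot hI
  have haK : algebraMap (𝓞 K) K a ≠ 0 := by
    intro h
    exact ha0 ((map_eq_zero_iff _ (IsFractionRing.injective (𝓞 K) K)).mp h)
  have hθa : ι (algebraMap (𝓞 K) K a) ≠ 0 := by
    simp only [ne_eq, map_eq_zero]; exact haK
  ext lam
  constructor
  · intro hlam
    -- lam * θ a ∈ Λ
    have h1 : lam * ι (algebraMap (𝓞 K) K a) ∈ idealLattice ι I :=
      hlam _ ((mem_idealLattice ι).mpr ⟨a, haI, rfl⟩)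
    obtain ⟨b, hbI, hb⟩ := (mem_idealLattice ι).mp h1
    set y : K := algebraMap (𝓞 K) K b / algebraMap (𝓞 K) K a with hy
    have hlam_eq : lam = ι y := by
      rw [hy, map_div₀]
      field_simp [← hb]
      exact hb.symm
    -- y is integral
    have hyint : IsIntegral ℤ y := by
      let f : (𝓞 K) →ₗ[ℤ] K := (Algebra.linearMap (𝓞 K) K).restrictScalars ℤ
      have hNfg : (I.restrictScalars ℤ).FG := by
        have : IsNoetherian ℤ (𝓞 K) := isNoetherian_of_isNoetherianRing_of_finite ℤ (𝓞 K)
        exact IsNoetherian.noetherian _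
      refine isIntegral_of_smul_mem_submodule
        (Submodule.map f (I.restrictScalars ℤ)) ?_ (hNfg.map f) y ?_
      · intro hbot
        have : algebraMap (𝓞 K) K a ∈ Submodule.map f (I.restrictScalars ℤ) :=
          ⟨a, haI, rfl⟩
        rw [hbot] at this
        exact haK this
      · rintro _ ⟨c, hcI, rfl⟩
        have h2 : lam * ι (algebraMap (𝓞 K) K c) ∈ idealLattice ι I :=
          hlam _ ((mem_idealLattice ι).mpr ⟨c, hcI, rfl⟩)
        obtain ⟨d, hdI, hd⟩ := (mem_idealLattice ι).mp h2
        have : y • f c = f d := by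
          apply ι.injective
          show ι (y * algebraMap (𝓞 K) K c) = ι (algebraMap (𝓞 K) K d)
          rw [_root_.map_mul, ← hlam_eq, hd]
        rw [this]
        exact ⟨d, hdI, rfl⟩
    exact ⟨⟨y, hyint⟩, hlam_eq.symm⟩
  · rintro ⟨x, rfl⟩
    intro z hz
    obtain ⟨c, hcI, rfl⟩ := (mem_idealLattice ι).mp hz
    rw [RingHom.coe_comp, Function.comp_apply, ← _root_.map_mul, ← _root_.map_mul]
    exact (mem_idealLattice ι).mpr ⟨x * c, I.mul_mem_left x hcI, rfl⟩

lemma homothetic_symm {Λ Λ' : AddSubgroup ℂ} (h : Homothetic Λ Λ') : Homothetic Λ' Λ := by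
  obtain ⟨lam, hlam, h⟩ := h
  exact ⟨lam⁻¹, inv_ne_zero hlam, by
    rw [← h, map_mulLeft_map_mulLeft, inv_mul_cancel₀ hlam, map_mulLeft_one]⟩

lemma lattice_exists_ne_zero {Λ : AddSubgroup ℂ}
    (hΛs : Submodule.span ℝ (Λ : Set ℂ) = ⊤) : ∃ w ∈ Λ, w ≠ 0 := by
  by_contra h
  push_neg at h
  have : (Λ : Set ℂ) ⊆ {0} := fun z hz => h z hz
  have h2 : Submodule.span ℝ (Λ : Set ℂ) ≤ Submodule.span ℝ {0} := Submodule.span_mono this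
  rw [hΛs, Submodule.span_zero_singleton] at h2
  exact one_ne_zero (Submodule.mem_bot ℝ |>.mp (h2 trivial))

end aux6
section aux7
variable {K : Type*} [Field K] [NumberField K] (ι : K →+* ℂ)

noncomputable def latUnit (hdeg : Module.finrank ℚ K = 2) (Λ : AddSubgroup ℂ)
    (hΛ : IsComplexLattice Λ)
    (hm : ∀ (x : 𝓞 K), ∀ z ∈ Λ, ι (algebraMap (𝓞 K) K x) * z ∈ Λ)
    (w : ℂ) (hw : w ∈ Λ) (hw0 : w ≠ 0) : (FractionalIdeal (𝓞 K)⁰ K)ˣ :=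
  Units.mk0
    ⟨latSub ι Λ hm w,
      FractionalIdeal.isFractional_of_fg (latSub_fg ι hdeg Λ hΛ.1 hΛ.2 hm hw hw0)⟩
    (by
      intro h
      replace h := congrArg (fun I : FractionalIdeal (𝓞 K)⁰ K => (I : Submodule (𝓞 K) K)) h
      change latSub ι Λ hm w = ((0 : FractionalIdeal (𝓞 K)⁰ K) : Submodule (𝓞 K) K) at h
      rw [FractionalIdeal.coe_zero] at h
      have h1 : (1 : K) ∈ latSub ι Λ hm w := latSub_one_mem ι hw
      rw [show (latSub ι Λ hm w) = (⊥ : Submodule (𝓞 K) K) from h] at h1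
      simpa using h1)

lemma mem_latUnit {hdeg Λ hΛ hm w hw hw0} {x : K} :
    x ∈ ((latUnit ι hdeg Λ hΛ hm w hw hw0 : (FractionalIdeal (𝓞 K)⁰ K)ˣ) :
      FractionalIdeal (𝓞 K)⁰ K) ↔ ι x * w ∈ Λ := Iff.rfl

end aux7
section aux8
variable {K : Type*} [Field K] [NumberField K] (ι : K →+* ℂ)

lemma latUnit_mk_eq_of_homothetic (hdeg : Module.finrank ℚ K = 2)
    {Λ Λ' : AddSubgroup ℂ} (hΛ : IsComplexLattice Λ) (hΛ' : IsComplexLattice Λ')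
    {hm : ∀ (x : 𝓞 K), ∀ z ∈ Λ, ι (algebraMap (𝓞 K) K x) * z ∈ Λ}
    {hm' : ∀ (x : 𝓞 K), ∀ z ∈ Λ', ι (algebraMap (𝓞 K) K x) * z ∈ Λ'}
    {w w' : ℂ} (hw : w ∈ Λ) (hw0 : w ≠ 0) (hw' : w' ∈ Λ') (hw0' : w' ≠ 0)
    (hom : Homothetic Λ Λ') :
    ClassGroup.mk K (latUnit ι hdeg Λ hΛ hm w hw hw0)
      = ClassGroup.mk K (latUnit ι hdeg Λ' hΛ' hm' w' hw' hw0') := by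
  obtain ⟨lam, hlam, hmap⟩ := hom
  have hw'' : w' ∈ AddSubgroup.map (AddMonoidHom.mulLeft lam) Λ := by rw [hmap]; exact hw'
  obtain ⟨g0, hg0, hg0e⟩ := hw''
  have hg0e : lam * g0 = w' := hg0e
  obtain ⟨x0, hx0mem, hx0⟩ := latSub_surj ι hdeg Λ hΛ.1 hΛ.2 hm hw hw0 hg0
  have hg00 : g0 ≠ 0 := by rintro rfl; rw [mul_zero] at hg0e; exact hw0' hg0e.symm
  have hx00 : x0 ≠ 0 := by
    rintro rfl; rw [_root_.map_zero, zero_mul] at hx0; exact hg00 hx0.symm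
  rw [classgroup_mk_eq_iff]
  refine ⟨x0, hx00, ?_⟩
  have hιx0 : ι x0 ≠ 0 := by simpa using hx00
  ext x
  rw [mem_latUnit, FractionalIdeal.mem_singleton_mul]
  constructor
  · intro hx
    refine ⟨x / x0, ?_, by field_simp⟩
    rw [mem_latUnit]
    have : ι (x / x0) * w' = lam * (ι x * w) := by
      rw [map_div₀, ← hg0e, ← hx0]
      field_simp
    rw [this, ← hmap]
    exact ⟨ι x * w, hx, rfl⟩
  · rintro ⟨z, hz, rfl⟩
    have hz' : ι z * w' ∈ Λ' := hz
    rw [← hmap] at hz'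
    obtain ⟨g, hg, hge⟩ := hz'
    have hge : lam * g = ι z * w' := hge
    have : ι (x0 * z) * w = g := by
      have h1 : lam * (ι (x0 * z) * w) = lam * g := by
        rw [hge, ← hg0e, ← hx0, _root_.map_mul]
        ring
      have := mul_left_cancel₀ hlam h1
      exact this
    rw [this]
    exact hg

lemma homothetic_of_latUnit_mk_eq (hdeg : Module.finrank ℚ K = 2)
    {Λ Λ' : AddSubgroup ℂ} (hΛ : IsComplexLattice Λ) (hΛ' : IsComplexLattice Λ')
    {hm : ∀ (x : 𝓞 K), ∀ z ∈ Λ, ι (algebraMap (𝓞 K) K x) * z ∈ Λ}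
    {hm' : ∀ (x : 𝓞 K), ∀ z ∈ Λ', ι (algebraMap (𝓞 K) K x) * z ∈ Λ'}
    {w w' : ℂ} (hw : w ∈ Λ) (hw0 : w ≠ 0) (hw' : w' ∈ Λ') (hw0' : w' ≠ 0)
    (h : ClassGroup.mk K (latUnit ι hdeg Λ hΛ hm w hw hw0)
      = ClassGroup.mk K (latUnit ι hdeg Λ' hΛ' hm' w' hw' hw0')) :
    Homothetic Λ Λ' := by
  rw [classgroup_mk_eq_iff] at h
  obtain ⟨u, hu0, hval⟩ := h
  have hιu : ι u ≠ 0 := by simpa using hu0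
  apply homothetic_symm
  refine ⟨ι u * w / w', by
    apply div_ne_zero (mul_ne_zero hιu hw0) hw0', ?_⟩
  ext g
  constructor
  · rintro ⟨g', hg', rfl⟩
    show ι u * w / w' * g' ∈ Λ
    obtain ⟨x', hx'mem, hx'⟩ := latSub_surj ι hdeg Λ' hΛ'.1 hΛ'.2 hm' hw' hw0' hg'
    have hux' : u * x' ∈ ((latUnit ι hdeg Λ hΛ hm w hw hw0 :
        (FractionalIdeal (𝓞 K)⁰ K)ˣ) : FractionalIdeal (𝓞 K)⁰ K) := by
      rw [hval, FractionalIdeal.mem_singleton_mul]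
      exact ⟨x', hx'mem, rfl⟩
    rw [mem_latUnit] at hux'
    have : ι u * w / w' * g' = ι (u * x') * w := by
      rw [← hx', _root_.map_mul]
      field_simp
    rw [this]
    exact hux'
  · intro hg
    obtain ⟨x, hxmem, hx⟩ := latSub_surj ι hdeg Λ hΛ.1 hΛ.2 hm hw hw0 hg
    have hx2 : x ∈ ((latUnit ι hdeg Λ hΛ hm w hw hw0 :
        (FractionalIdeal (𝓞 K)⁰ K)ˣ) : FractionalIdeal (𝓞 K)⁰ K) := hxmem
    rw [hval, FractionalIdeal.mem_singleton_mul] at hx2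
    obtain ⟨z, hz, rfl⟩ := hx2
    rw [mem_latUnit] at hz
    refine ⟨ι z * w', hz, ?_⟩
    show ι u * w / w' * (ι z * w') = g
    rw [← hx, _root_.map_mul]
    field_simp

end aux8
section aux9
variable {K : Type*} [Field K] [NumberField K] (ι : K →+* ℂ)

lemma latUnit_idealLattice (hdeg : Module.finrank ℚ K = 2) (I0 : (Ideal (𝓞 K))⁰)
    (hΛ : IsComplexLattice (idealLattice ι I0.1))
    {hm : ∀ (x : 𝓞 K), ∀ z ∈ idealLattice ι I0.1, ι (algebraMap (𝓞 K) K x) * z ∈ idealLattice ι I0.1}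
    {w : ℂ} (hw : w ∈ idealLattice ι I0.1) (hw0 : w ≠ 0) :
    ClassGroup.mk K (latUnit ι hdeg (idealLattice ι I0.1) hΛ hm w hw hw0) = ClassGroup.mk0 I0 := by
  obtain ⟨a0, ha0I, ha0e⟩ := (mem_idealLattice ι).mp hw
  have ha0K : algebraMap (𝓞 K) K a0 ≠ 0 := by
    intro h
    rw [← ha0e, h, _root_.map_zero] at hw0
    exact hw0 rfl
  have hθa0 : ι (algebraMap (𝓞 K) K a0) ≠ 0 := by simpa using ha0K
  rw [← ClassGroup.mk_mk0 K I0, classgroup_mk_eq_iff]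
  refine ⟨(algebraMap (𝓞 K) K a0)⁻¹, inv_ne_zero ha0K, ?_⟩
  ext x
  rw [mem_latUnit, FractionalIdeal.mem_singleton_mul]
  constructor
  · intro hx
    rw [← ha0e] at hx
    obtain ⟨c, hcI, hc⟩ := (mem_idealLattice ι).mp hx
    refine ⟨algebraMap (𝓞 K) K c, ?_, ?_⟩
    · rw [FractionalIdeal.coe_mk0, FractionalIdeal.mem_coeIdeal]
      exact ⟨c, hcI, rfl⟩
    · have : algebraMap (𝓞 K) K c = x * algebraMap (𝓞 K) K a0 := by
        apply ι.injective
        rw [_root_.map_mul, hc]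
      rw [this]
      field_simp
  · rintro ⟨z, hz, rfl⟩
    rw [FractionalIdeal.coe_mk0, FractionalIdeal.mem_coeIdeal] at hz
    obtain ⟨c, hcI, rfl⟩ := hz
    rw [← ha0e]
    have : ι ((algebraMap (𝓞 K) K a0)⁻¹ * algebraMap (𝓞 K) K c) * ι (algebraMap (𝓞 K) K a0)
        = ι (algebraMap (𝓞 K) K c) := by
      rw [← _root_.map_mul]
      congr 1
      field_simp
    rw [this]
    exact (mem_idealLattice ι).mpr ⟨c, hcI, rfl⟩

end aux9
/-- Let `K` be an imaginary quadratic field, embedded in `ℂ` by `ι`.  The homothety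
classes of lattices `Λ ⊂ ℂ` with multiplier ring `{λ : λΛ ⊆ Λ} = ι(𝓞 K)` are in bijection
with the ideal class group `Cl_K`; in particular there are exactly `h_K = #Cl_K`
isomorphism classes of complex elliptic curves with CM by `𝓞 K`. -/
theorem cm_lattices_biject_with_class_group
    (K : Type*) [Field K] [NumberField K] (hdeg : Module.finrank ℚ K = 2)
    (ι : K →+* ℂ) (him : ∃ x : K, (ι x).im ≠ 0) :
    (∃ F : Quotient (CMLatticeSetoid (Set.range ⇑(ι.comp (algebraMap (𝓞 K) K)))) →
        ClassGroup (𝓞 K), Function.Bijective F) ∧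
      Nat.card (Quotient (CMLatticeSetoid (Set.range ⇑(ι.comp (algebraMap (𝓞 K) K))))) =
        Nat.card (ClassGroup (𝓞 K)) := by
  classical
  set RS := Set.range ⇑(ι.comp (algebraMap (𝓞 K) K)) with hRS
  have hm_of : ∀ (Λ : AddSubgroup ℂ), multiplierRing Λ = RS →
      ∀ (x : 𝓞 K), ∀ z ∈ Λ, ι (algebraMap (𝓞 K) K x) * z ∈ Λ := by
    intro Λ hmul x z hz
    have hx : ι (algebraMap (𝓞 K) K x) ∈ multiplierRing Λ := by
      rw [hmul]; exact ⟨x, rfl⟩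
    exact hx z hz
  let T := {Λ : AddSubgroup ℂ // IsComplexLattice Λ ∧ multiplierRing Λ = RS}
  let wsel : ∀ Λp : T, {w : ℂ // w ∈ Λp.1 ∧ w ≠ 0} := fun Λp =>
    ⟨(lattice_exists_ne_zero Λp.2.1.2).choose, (lattice_exists_ne_zero Λp.2.1.2).choose_spec⟩
  let F0 : T → ClassGroup (𝓞 K) := fun Λp =>
    ClassGroup.mk K (latUnit ι hdeg Λp.1 Λp.2.1 (hm_of Λp.1 Λp.2.2)
      (wsel Λp).1 (wsel Λp).2.1 (wsel Λp).2.2)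
  have hsound : ∀ a b : T, (CMLatticeSetoid RS).r a b → F0 a = F0 b := by
    intro a b hab
    exact latUnit_mk_eq_of_homothetic ι hdeg a.2.1 b.2.1
      (wsel a).2.1 (wsel a).2.2 (wsel b).2.1 (wsel b).2.2 hab
  let F : Quotient (CMLatticeSetoid RS) → ClassGroup (𝓞 K) := Quotient.lift F0 hsound
  have hinj : Function.Injective F := by
    intro a b
    refine Quotient.inductionOn₂ a b ?_
    intro x y h
    refine Quotient.sound ?_
    exact homothetic_of_latUnit_mk_eq ι hdeg x.2.1 y.2.1
      (wsel x).2.1 (wsel x).2.2 (wsel y).2.1 (wsel y).2.2 h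
  have hsurj : Function.Surjective F := by
    intro c
    obtain ⟨I0, hI0⟩ := ClassGroup.mk0_surjective c
    have hIne : I0.1 ≠ ⊥ := mem_nonZeroDivisors_iff_ne_zero.mp I0.2
    have h1 : IsComplexLattice (idealLattice ι I0.1) :=
      ⟨idealLattice_discrete ι him hdeg I0.1, idealLattice_span ι him I0.1 hIne⟩
    have h2 : multiplierRing (idealLattice ι I0.1) = RS := idealLattice_mult ι I0.1 hIne
    refine ⟨⟦⟨idealLattice ι I0.1, h1, h2⟩⟧, ?_⟩
    show F0 _ = c
    exact (latUnit_idealLattice ι hdeg I0 h1 _ _).trans hI0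
  exact ⟨⟨F, hinj, hsurj⟩, Nat.card_eq_of_bijective F ⟨hinj, hsurj⟩⟩
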